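/- Let Z be a nonempty closed convex subset of R^d, let F : R^d → R^d be μ-strongly monotone (⟨F(z1) − F(z2), z1 − z2⟩ ≥ μ‖z1 − z2‖² for all z1, z2, with μ > 0) and L-Lipschitz, and let 0 < γ ≤ 1/(4L). Let z* ∈ Z satisfy the variational inequality ⟨F(z*), w − z*⟩ ≥ 0 for all w ∈ Z. Define the extragradient iteration z^{k+1/2} = proj_Z(z^k − γ F(z^k)), z^{k+1} = proj_Z(z^k − γ F(z^{k+1/2})) started from z^0 ∈ Z. Then for every K ≥ 0, ‖z^K − z*‖² ≤ (1 − μγ/2)^K ‖z^0 − z*‖². -/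

import Mathlib

set_option maxHeartbeats 1000000


open scoped RealInnerProductSpace

/-- the extragradient method on a nonempty closed convex set `Z ⊆ ℝ^d`
with a `μ`-strongly monotone, `L`-Lipschitz operator `F`, stepsize `0 < γ ≤ 1/(4L)`,
and `z*` solving the variational inequality, converges linearly:
`‖z^K − z*‖² ≤ (1 − μγ/2)^K ‖z^0 − z*‖²`. -/
theorem extragradient_linear_convergence
    (d : ℕ) (Z : Set (EuclideanSpace ℝ (Fin d)))
    (hZne : Z.Nonempty) (hZcl : IsClosed Z) (hZcx : Convex ℝ Z)
    (F : EuclideanSpace ℝ (Fin d) → EuclideanSpace ℝ (Fin d))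
    (L γ μ : ℝ) (hL : 0 < L) (hμ : 0 < μ)
    (hmono : ∀ z1 z2, μ * ‖z1 - z2‖ ^ 2 ≤ ⟪F z1 - F z2, z1 - z2⟫)
    (hlip : ∀ z1 z2, ‖F z1 - F z2‖ ≤ L * ‖z1 - z2‖)
    (hγ0 : 0 < γ) (hγ : γ ≤ 1 / (4 * L))
    -- `P` is the Euclidean projection onto `Z`
    (P : EuclideanSpace ℝ (Fin d) → EuclideanSpace ℝ (Fin d))
    (hP : ∀ v, P v ∈ Z ∧ ∀ w ∈ Z, ‖v - P v‖ ≤ ‖v - w‖)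
    -- `z*` solves the variational inequality
    (zs : EuclideanSpace ℝ (Fin d)) (hzs : zs ∈ Z)
    (hVI : ∀ w ∈ Z, 0 ≤ ⟪F zs, w - zs⟫)
    -- the extragradient iterates: `zh k = z^{k+1/2}`
    (z zh : ℕ → EuclideanSpace ℝ (Fin d)) (hz0 : z 0 ∈ Z)
    (hstep1 : ∀ k, zh k = P (z k - γ • F (z k)))
    (hstep2 : ∀ k, z (k + 1) = P (z k - γ • F (zh k))) :
    ∀ K : ℕ, ‖z K - zs‖ ^ 2 ≤ (1 - μ * γ / 2) ^ K * ‖z 0 - zs‖ ^ 2 := by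
  -- trivial case: the whole space is a single point
  by_cases htriv : ∀ a b : EuclideanSpace ℝ (Fin d), a = b
  · intro K
    rw [htriv (z K) zs, htriv (z 0) zs, sub_self]
    simp
  push_neg at htriv
  obtain ⟨a, b, hab⟩ := htriv
  -- from strong monotonicity and Lipschitzness, μ ≤ L
  have hab' : 0 < ‖a - b‖ := by
    rw [norm_pos_iff]; exact sub_ne_zero_of_ne hab
  have hμL : μ ≤ L := by
    have h1 := hmono a b
    have h2 : ⟪F a - F b, a - b⟫ ≤ ‖F a - F b‖ * ‖a - b‖ := real_inner_le_norm _ _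
    have h3 : ‖F a - F b‖ * ‖a - b‖ ≤ (L * ‖a - b‖) * ‖a - b‖ :=
      mul_le_mul_of_nonneg_right (hlip a b) (norm_nonneg _)
    have hx : 0 < ‖a - b‖ ^ 2 := by positivity
    have heq : L * ‖a - b‖ * ‖a - b‖ = L * ‖a - b‖ ^ 2 := by ring
    have h4 : μ * ‖a - b‖ ^ 2 ≤ L * ‖a - b‖ ^ 2 := by linarith
    exact (mul_le_mul_iff_of_pos_right hx).mp h4
  have hγL : γ * L ≤ 1 / 4 := by
    have h4L : 0 < 4 * L := by linarith
    have := (le_div_iff₀ h4L).1 hγ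
    linarith
  have hμγ : μ * γ ≤ 1 / 4 := by
    have : μ * γ ≤ L * γ := mul_le_mul_of_nonneg_right hμL hγ0.le
    linarith
  have hμγ0 : 0 < μ * γ := mul_pos hμ hγ0
  -- variational characterization of the projection
  have hproj : ∀ v, ∀ w ∈ Z, ⟪v - P v, w - P v⟫ ≤ 0 := by
    intro v
    have hPv := (hP v).1
    haveI : Nonempty Z := ⟨⟨P v, hPv⟩⟩
    have heq : ‖v - P v‖ = ⨅ w : Z, ‖v - (w : EuclideanSpace ℝ (Fin d))‖ := by
      apply le_antisymm
      · exact le_ciInf fun w => (hP v).2 w w.2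
      · exact ciInf_le ⟨0, by rintro x ⟨w, rfl⟩; positivity⟩ (⟨P v, hPv⟩ : Z)
    exact (norm_eq_iInf_iff_real_inner_le_zero hZcx hPv).1 heq
  -- one-step contraction
  have hstep : ∀ k, ‖z (k + 1) - zs‖ ^ 2 ≤ (1 - μ * γ / 2) * ‖z k - zs‖ ^ 2 := by
    intro k
    set u := z k with hu
    set h := zh k with hh
    set p := z (k + 1) with hp
    have hhZ : h ∈ Z := by rw [hh, hstep1 k]; exact (hP _).1
    have hpZ : p ∈ Z := by rw [hp, hstep2 k]; exact (hP _).1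
    set A := ‖u - zs‖ with hA
    set B := ‖u - h‖ with hB
    set C := ‖h - p‖ with hC
    set D := ‖h - zs‖ with hD
    set UP := ‖u - p‖ with hUP
    set s1 := ⟪u - p, p - zs⟫ with hs1
    set s2 := ⟪F h, p - zs⟫ with hs2
    set s3 := ⟪F h, p - h⟫ with hs3
    set s4 := ⟪F h, h - zs⟫ with hs4
    set s5 := ⟪u - h, p - h⟫ with hs5
    set s6 := ⟪F u, p - h⟫ with hs6
    set s7 := ⟪F h - F u, p - h⟫ with hs7
    -- projection inequality at the second step, tested with zs
    have f2 : γ * s2 ≤ s1 := by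
      have h0 : ⟪(u - γ • F h) - P (u - γ • F h), zs - P (u - γ • F h)⟫ ≤ 0 :=
        hproj _ zs hzs
      rw [← hstep2 k, ← hp] at h0
      have hid : ⟪(u - γ • F h) - p, zs - p⟫ = -s1 + γ * s2 := by
        rw [hs1, hs2]
        simp only [inner_sub_left, inner_sub_right, real_inner_smul_left]
        ring
      rw [hid] at h0; linarith
    -- projection inequality at the first step, tested with p
    have f4 : s5 ≤ γ * s6 := by
      have h0 : ⟪(u - γ • F u) - P (u - γ • F u), p - P (u - γ • F u)⟫ ≤ 0 :=
        hproj _ p hpZ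
      rw [← hstep1 k, ← hh] at h0
      have hid : ⟪(u - γ • F u) - h, p - h⟫ = s5 - γ * s6 := by
        rw [hs5, hs6]
        simp only [inner_sub_left, inner_sub_right, real_inner_smul_left]
        ring
      rw [hid] at h0; linarith
    -- linear identities between inner products
    have f3 : s2 = s3 + s4 := by
      rw [hs2, hs3, hs4]
      simp only [inner_sub_left, inner_sub_right]
      ring
    have f5 : s7 = s3 - s6 := by
      rw [hs7, hs3, hs6]
      simp only [inner_sub_left, inner_sub_right]
      ring
    -- strong monotonicity + VI: s4 ≥ μ D²
    have f6 : μ * D ^ 2 ≤ s4 := by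
      have h1 := hmono h zs
      have h2 := hVI h hhZ
      have hid : ⟪F h - F zs, h - zs⟫ = s4 - ⟪F zs, h - zs⟫ := by
        rw [hs4]; simp only [inner_sub_left]
      rw [hid] at h1
      rw [← hD] at h1
      linarith
    -- norm expansion identities
    have id1 : A ^ 2 = UP ^ 2 + 2 * s1 + ‖p - zs‖ ^ 2 := by
      have := norm_add_sq_real (u - p) (p - zs)
      rw [show (u - p) + (p - zs) = u - zs by abel] at this
      rw [hA, hUP, hs1]; linarith
    have f7 : UP ^ 2 + 2 * s5 = B ^ 2 + C ^ 2 := by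
      have h1 := norm_add_sq_real (u - h) (h - p)
      rw [show (u - h) + (h - p) = u - p by abel] at h1
      have h2 : s5 = -⟪u - h, h - p⟫ := by
        rw [hs5, show p - h = -(h - p) by abel, inner_neg_right]
      rw [hUP, hB, hC]; rw [h2]; linarith
    -- Cauchy–Schwarz / Lipschitz bound on s7
    have f8 : -(L * B * C) ≤ s7 := by
      have h1 : |s7| ≤ ‖F h - F u‖ * ‖p - h‖ := abs_real_inner_le_norm _ _
      have h2 : ‖F h - F u‖ * ‖p - h‖ ≤ (L * ‖h - u‖) * ‖p - h‖ :=
        mul_le_mul_of_nonneg_right (hlip h u) (norm_nonneg _)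
      have h3 : ‖h - u‖ = B := by rw [hB, norm_sub_rev]
      have h4 : ‖p - h‖ = C := by rw [hC, norm_sub_rev]
      rw [h3, h4] at h2
      rw [h4] at h1
      have h5 := neg_abs_le s7
      linarith
    have hB0 : 0 ≤ B := norm_nonneg _
    have hC0 : 0 ≤ C := norm_nonneg _
    have hD0 : 0 ≤ D := norm_nonneg _
    have hA0 : 0 ≤ A := norm_nonneg _
    -- combine: multiply inequalities by γ ≥ 0
    have m4 : γ * (μ * D ^ 2) ≤ γ * s4 := mul_le_mul_of_nonneg_left f6 hγ0.le
    have m7 : γ * (-(L * B * C)) ≤ γ * s7 := mul_le_mul_of_nonneg_left f8 hγ0.le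
    have m8 : γ * (L * B * C) ≤ (1 / 8) * (B ^ 2 + C ^ 2) := by
      have hBC : 0 ≤ B * C := mul_nonneg hB0 hC0
      have h1 : (γ * L) * (B * C) ≤ (1 / 4) * (B * C) :=
        mul_le_mul_of_nonneg_right hγL hBC
      have h2 : B * C ≤ (B ^ 2 + C ^ 2) / 2 := by
        have := sq_nonneg (B - C); linarith [this]
      have h3 : γ * (L * B * C) = (γ * L) * (B * C) := by ring
      linarith
    have hγs2 : γ * s2 = γ * s3 + γ * s4 := by rw [f3]; ring
    have hγs3 : γ * s3 = γ * s6 + γ * s7 := by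
      have : s3 = s6 + s7 := by rw [f5]; ring
      rw [this]; ring
    -- key one-step inequality
    have key : ‖p - zs‖ ^ 2 ≤ A ^ 2 - (3/4) * B ^ 2 - (3/4) * C ^ 2 - 2 * (μ * γ) * D ^ 2 := by
      linarith [id1, f2, hγs2, hγs3, f4, f7, m7, m8, m4]
    -- triangle inequality: A ≤ B + D
    have htri : A ≤ B + D := by
      have := norm_add_le (u - h) (h - zs)
      rw [show (u - h) + (h - zs) = u - zs by abel] at this
      rw [hA, hB, hD]; exact this
    have hA2 : A ^ 2 ≤ 2 * B ^ 2 + 2 * D ^ 2 := by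
      have h1 : A * A ≤ (B + D) * (B + D) := mul_self_le_mul_self hA0 htri
      have h2 := sq_nonneg (B - D)
      have h3 : A ^ 2 = A * A := sq A
      linarith
    have t1 : μ * γ * A ^ 2 ≤ μ * γ * (2 * B ^ 2 + 2 * D ^ 2) :=
      mul_le_mul_of_nonneg_left hA2 hμγ0.le
    have t2 : μ * γ * B ^ 2 ≤ (1 / 4) * B ^ 2 :=
      mul_le_mul_of_nonneg_right hμγ (sq_nonneg B)
    have t3 : 0 ≤ μ * γ * D ^ 2 := mul_nonneg hμγ0.le (sq_nonneg D)
    have t4 := sq_nonneg C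
    linarith [key, t1, t2, t3, t4, sq_nonneg B]
  -- induction
  intro K
  induction K with
  | zero => simp
  | succ k ih =>
    have hc : (0:ℝ) ≤ 1 - μ * γ / 2 := by linarith
    calc ‖z (k + 1) - zs‖ ^ 2 ≤ (1 - μ * γ / 2) * ‖z k - zs‖ ^ 2 := hstep k
      _ ≤ (1 - μ * γ / 2) * ((1 - μ * γ / 2) ^ k * ‖z 0 - zs‖ ^ 2) :=
        mul_le_mul_of_nonneg_left ih hc
      _ = (1 - μ * γ / 2) ^ (k + 1) * ‖z 0 - zs‖ ^ 2 := by ring
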